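/- Fix positive integers ℓ < k and t > 0. The homogeneous polynomial P(z) = |z|^{2k} + t|z|^{2k-2ℓ} Re(z^{2ℓ}) on ℂ is subharmonic on ℂ if and only if t ≤ k²/(k² - ℓ²). -/

import Mathlib

open Complex Real intervalIntegral Finset

lemma key_int (d : ℤ) : (∫ θ in (0:ℝ)..(2*Real.pi), Complex.exp (d * θ * Complex.I))
    = if d = 0 then (2*Real.pi : ℂ) else 0 := by
  rcases eq_or_ne d 0 with h | h
  · simp [h]
  · rw [if_neg h]
    have hc : (d : ℂ) * Complex.I ≠ 0 := by
      simp [Complex.I_ne_zero, Int.cast_eq_zero, h]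
    have h2 := integral_exp_mul_complex hc (a := 0) (b := 2*Real.pi)
    have e1 : (fun θ : ℝ => Complex.exp ((d:ℂ) * θ * Complex.I))
        = fun θ : ℝ => Complex.exp ((d:ℂ) * Complex.I * θ) := by
      funext θ; ring_nf
    rw [e1, h2]
    have : ((d:ℂ) * Complex.I * (2*Real.pi : ℝ)) = d * (2 * Real.pi * Complex.I) := by
      push_cast; ring
    rw [this, Complex.exp_int_mul_two_pi_mul_I]
    simp

noncomputable def F (m n : ℕ) (a : ℂ) (ρ : ℝ) (p q : ℕ) (θ : ℝ) : ℂ :=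
  ((Nat.choose m p * Nat.choose n q : ℕ) : ℂ) * a^(m-p) * ((starRingEnd ℂ) a)^(n-q)
    * (ρ:ℂ)^(p+q) * Complex.exp ((((p:ℤ) - q) : ℤ) * θ * Complex.I)

lemma expand (m n : ℕ) (a : ℂ) (ρ : ℝ) (θ : ℝ) :
    (a + ρ * Complex.exp (θ * Complex.I))^m
      * ((starRingEnd ℂ) (a + ρ * Complex.exp (θ * Complex.I))) ^ n
    = ∑ p ∈ range (m+1), ∑ q ∈ range (n+1), F m n a ρ p q θ := by
  have hconj : (starRingEnd ℂ) (a + ρ * Complex.exp (θ * Complex.I))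
      = (starRingEnd ℂ) a + ρ * Complex.exp (-(θ * Complex.I)) := by
    rw [map_add, map_mul, ← Complex.exp_conj]
    simp [Complex.conj_ofReal]
  rw [hconj, add_comm a, add_comm ((starRingEnd ℂ) a), add_pow, add_pow, Finset.sum_mul_sum]
  refine Finset.sum_congr rfl fun p hp => Finset.sum_congr rfl fun q hq => ?_
  unfold F
  rw [mul_pow, mul_pow, ← Complex.exp_nat_mul, ← Complex.exp_nat_mul]
  rw [show (((p:ℤ) - q : ℤ) : ℂ) * θ * Complex.I = (p:ℂ)*(θ*Complex.I) + (q:ℂ)*(-(θ*Complex.I)) by push_cast; ring,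
    Complex.exp_add]
  push_cast
  ring

lemma F_cont (m n : ℕ) (a : ℂ) (ρ : ℝ) (p q : ℕ) : Continuous (F m n a ρ p q) := by
  unfold F
  fun_prop

lemma F_int (m n : ℕ) (a : ℂ) (ρ : ℝ) (p q : ℕ) :
    (∫ θ in (0:ℝ)..(2*Real.pi), F m n a ρ p q θ)
    = ((Nat.choose m p * Nat.choose n q : ℕ) : ℂ) * a^(m-p) * ((starRingEnd ℂ) a)^(n-q)
        * (ρ:ℂ)^(p+q) * (if p = q then (2*Real.pi:ℂ) else 0) := by
  unfold F
  rw [intervalIntegral.integral_const_mul, key_int]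
  congr 1
  simp [sub_eq_zero]

lemma circle_int (m n : ℕ) (hnm : n ≤ m) (a : ℂ) (ρ : ℝ) :
    (∫ θ in (0:ℝ)..(2*Real.pi),
      (a + ρ * Complex.exp (θ * Complex.I))^m
        * ((starRingEnd ℂ) (a + ρ * Complex.exp (θ * Complex.I))) ^ n)
    = (2*Real.pi) * ∑ j ∈ range (n+1),
        ((Nat.choose m j * Nat.choose n j : ℕ) : ℂ) * a^(m-j) * ((starRingEnd ℂ) a)^(n-j)
          * (ρ:ℂ)^(2*j) := by
  have h1 : (∫ θ in (0:ℝ)..(2*Real.pi),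
      (a + ρ * Complex.exp (θ * Complex.I))^m
        * ((starRingEnd ℂ) (a + ρ * Complex.exp (θ * Complex.I))) ^ n)
      = ∑ p ∈ range (m+1), ∑ q ∈ range (n+1), ∫ θ in (0:ℝ)..(2*Real.pi), F m n a ρ p q θ := by
    rw [show (fun θ:ℝ => (a + ρ * Complex.exp (θ * Complex.I))^m
        * ((starRingEnd ℂ) (a + ρ * Complex.exp (θ * Complex.I))) ^ n)
      = fun θ:ℝ => ∑ p ∈ range (m+1), ∑ q ∈ range (n+1), F m n a ρ p q θ from
      funext fun θ => expand m n a ρ θ]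
    rw [intervalIntegral.integral_finset_sum]
    · exact Finset.sum_congr rfl fun p _ => intervalIntegral.integral_finset_sum
        (fun q _ => ((F_cont m n a ρ p q).intervalIntegrable _ _))
    · intro p _
      exact (continuous_finset_sum _ fun q _ => F_cont m n a ρ p q).intervalIntegrable _ _

  rw [h1]
  simp only [F_int]
  rw [Finset.sum_comm]
  rw [Finset.mul_sum]
  refine Finset.sum_congr rfl fun q hq => ?_
  rw [Finset.sum_eq_single q]
  · rw [if_pos rfl, two_mul, pow_add]; ring
  · intro p _ hpq; rw [if_neg hpq, mul_zero]
  · intro hq'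
    exact absurd (Finset.mem_range.mp hq |>.trans_le (Nat.succ_le_succ hnm)) (by
      exact fun h => hq' (Finset.mem_range.mpr h))

lemma pow_mul_conj_pow (a : ℂ) (m : ℕ) :
    a^m * ((starRingEnd ℂ) a)^m = ((‖a‖ ^ (2*m) : ℝ) : ℂ) := by
  rw [← mul_pow, Complex.mul_conj, pow_mul, Complex.sq_norm]
  push_cast
  ring

lemma u_eq (k ℓ : ℕ) (hk : ℓ < k) (t : ℝ) (z : ℂ) :
    ‖z‖ ^ (2*k) + t * ‖z‖ ^ (2*k - 2*ℓ) * (z ^ (2*ℓ)).re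
    = (z^k * ((starRingEnd ℂ) z)^k + (t:ℂ) * (z^(k+ℓ) * ((starRingEnd ℂ) z)^(k-ℓ))).re := by
  have h1 := pow_mul_conj_pow z k
  have h2 : z^(k+ℓ) * ((starRingEnd ℂ) z)^(k-ℓ)
      = z^(2*ℓ) * ((‖z‖ ^ (2*k-2*ℓ) : ℝ) : ℂ) := by
    have e : k + ℓ = 2*ℓ + (k-ℓ) := by omega
    rw [show 2*k - 2*ℓ = 2*(k-ℓ) by omega, e, pow_add, mul_assoc, pow_mul_conj_pow]
  rw [h1, h2]
  simp [Complex.add_re, Complex.re_ofReal_mul, Complex.mul_re, Complex.ofReal_re,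
    Complex.ofReal_im, ← Complex.ofReal_pow]
  ring

noncomputable def Sterm (k ℓ : ℕ) (t : ℝ) (a : ℂ) (ρ : ℝ) (j : ℕ) : ℝ :=
  ρ^(2*(j+1)) * (((Nat.choose k (j+1) : ℝ))^2 * ‖a‖^(2*(k-(j+1)))
      + t * (Nat.choose (k+ℓ) (j+1) : ℝ) * (Nat.choose (k-ℓ) (j+1) : ℝ)
        * (a^(k+ℓ-(j+1)) * ((starRingEnd ℂ) a)^(k-ℓ-(j+1))).re)

lemma mean_id (k ℓ : ℕ) (hk : ℓ < k) (t : ℝ) (a : ℂ) (ρ : ℝ) :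
    (2*Real.pi)⁻¹ * (∫ θ in (0:ℝ)..(2*Real.pi),
        (‖a + ρ * Complex.exp (θ * Complex.I)‖ ^ (2*k)
          + t * ‖a + ρ * Complex.exp (θ * Complex.I)‖ ^ (2*k - 2*ℓ)
            * ((a + ρ * Complex.exp (θ * Complex.I)) ^ (2*ℓ)).re))
    = (‖a‖ ^ (2*k) + t * ‖a‖ ^ (2*k - 2*ℓ) * (a ^ (2*ℓ)).re)
      + ∑ j ∈ range k, Sterm k ℓ t a ρ j := by
  set W : ℝ → ℂ := fun θ => a + ρ * Complex.exp (θ * Complex.I) with hW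
  set G : ℝ → ℂ := fun θ => (W θ)^k * ((starRingEnd ℂ) (W θ))^k
      + (t:ℂ) * ((W θ)^(k+ℓ) * ((starRingEnd ℂ) (W θ))^(k-ℓ)) with hG
  have hWcont : Continuous W := by fun_prop
  have hWconj : Continuous fun θ => (starRingEnd ℂ) (W θ) := hWcont.star
  have hGcont : Continuous G := by
    rw [hG]
    exact ((hWcont.pow k).mul (hWconj.pow k)).add
      (continuous_const.mul ((hWcont.pow _).mul (hWconj.pow _)))
  -- step 1 : rewrite the real integrand as re ∘ G
  have h1 : (∫ θ in (0:ℝ)..(2*Real.pi),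
        (‖W θ‖ ^ (2*k) + t * ‖W θ‖ ^ (2*k - 2*ℓ) * ((W θ) ^ (2*ℓ)).re))
      = ∫ θ in (0:ℝ)..(2*Real.pi), Complex.reCLM (G θ) := by
    apply intervalIntegral.integral_congr
    intro θ _
    simp only [hG, Complex.reCLM_apply]
    exact u_eq k ℓ hk t (W θ)
  -- step 2 : move re out
  have h2 : (∫ θ in (0:ℝ)..(2*Real.pi), Complex.reCLM (G θ))
      = Complex.reCLM (∫ θ in (0:ℝ)..(2*Real.pi), G θ) :=
    ContinuousLinearMap.intervalIntegral_comp_comm _ (hGcont.intervalIntegrable _ _)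
  -- step 3 : complex integral via circle_int
  have hA := circle_int k k le_rfl a ρ
  have hB := circle_int (k+ℓ) (k-ℓ) (by omega) a ρ
  have h3 : (∫ θ in (0:ℝ)..(2*Real.pi), G θ)
      = (2*Real.pi) * ((∑ j ∈ range (k+1),
            ((Nat.choose k j * Nat.choose k j : ℕ) : ℂ) * a^(k-j) * ((starRingEnd ℂ) a)^(k-j)
              * (ρ:ℂ)^(2*j))
          + (t:ℂ) * ∑ j ∈ range (k-ℓ+1),
            ((Nat.choose (k+ℓ) j * Nat.choose (k-ℓ) j : ℕ) : ℂ) * a^(k+ℓ-j)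
              * ((starRingEnd ℂ) a)^(k-ℓ-j) * (ρ:ℂ)^(2*j)) := by
    rw [hG]
    beta_reduce
    rw [intervalIntegral.integral_add (f := fun θ => (W θ)^k * ((starRingEnd ℂ) (W θ))^k)
        (g := fun θ => (t:ℂ) * ((W θ)^(k+ℓ) * ((starRingEnd ℂ) (W θ))^(k-ℓ))) (((hWcont.pow k).mul (hWconj.pow k)).intervalIntegrable _ _)
        ((continuous_const.mul ((hWcont.pow (k+ℓ)).mul (hWconj.pow (k-ℓ)))).intervalIntegrable _ _),
      intervalIntegral.integral_const_mul, hA, hB]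
    ring
  rw [h1, h2, h3]
  have hπ : (2*Real.pi) ≠ 0 := by positivity
  have hcast : ((2*Real.pi : ℝ) : ℂ) = (2*Real.pi : ℂ) := by push_cast; ring
  rw [← hcast, Complex.reCLM_apply, Complex.re_ofReal_mul, ← mul_assoc, inv_mul_cancel₀ hπ,
    one_mul]
  -- split off the j = 0 terms
  rw [Finset.sum_range_succ' (fun j => ((Nat.choose k j * Nat.choose k j : ℕ) : ℂ)
        * a^(k-j) * ((starRingEnd ℂ) a)^(k-j) * (ρ:ℂ)^(2*j)),
      Finset.sum_range_succ' (fun j => ((Nat.choose (k+ℓ) j * Nat.choose (k-ℓ) j : ℕ) : ℂ)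
        * a^(k+ℓ-j) * ((starRingEnd ℂ) a)^(k-ℓ-j) * (ρ:ℂ)^(2*j))]
  have hext : (∑ j ∈ range (k-ℓ), ((Nat.choose (k+ℓ) (j+1) * Nat.choose (k-ℓ) (j+1) : ℕ) : ℂ)
        * a^(k+ℓ-(j+1)) * ((starRingEnd ℂ) a)^(k-ℓ-(j+1)) * (ρ:ℂ)^(2*(j+1)))
      = ∑ j ∈ range k, ((Nat.choose (k+ℓ) (j+1) * Nat.choose (k-ℓ) (j+1) : ℕ) : ℂ)
        * a^(k+ℓ-(j+1)) * ((starRingEnd ℂ) a)^(k-ℓ-(j+1)) * (ρ:ℂ)^(2*(j+1)) := by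
    apply Finset.sum_subset (Finset.range_subset_range.mpr (by omega))
    intro j _ hj
    have : Nat.choose (k-ℓ) (j+1) = 0 := Nat.choose_eq_zero_of_lt (by
      simp only [Finset.mem_range, not_lt] at hj; omega)
    simp [this]
  rw [hext]
  have hsplit : ∀ x y u v : ℂ, (x + y) + (t:ℂ) * (u + v) = (y + (t:ℂ)*v) + (x + (t:ℂ)*u) :=
    fun x y u v => by ring
  rw [hsplit]
  rw [Complex.add_re]
  have hua : ((((Nat.choose k 0 * Nat.choose k 0 : ℕ) : ℂ) * a^(k-0) * ((starRingEnd ℂ) a)^(k-0)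
        * (ρ:ℂ)^(2*0))
      + (t:ℂ) * (((Nat.choose (k+ℓ) 0 * Nat.choose (k-ℓ) 0 : ℕ) : ℂ) * a^(k+ℓ-0)
        * ((starRingEnd ℂ) a)^(k-ℓ-0) * (ρ:ℂ)^(2*0))).re
      = ‖a‖ ^ (2*k) + t * ‖a‖ ^ (2*k - 2*ℓ) * (a ^ (2*ℓ)).re := by
    simp only [Nat.choose_zero_right, Nat.mul_zero, mul_zero, Nat.mul_one, Nat.cast_one, one_mul,
      pow_zero, Nat.sub_zero, mul_one]
    exact (u_eq k ℓ hk t a).symm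
  rw [hua]
  congr 1
  rw [Finset.mul_sum, ← Finset.sum_add_distrib, Complex.re_sum]
  refine Finset.sum_congr rfl fun j hj => ?_
  -- termwise real part
  have hm := pow_mul_conj_pow a (k-(j+1))
  have e1 : ((Nat.choose k (j+1) * Nat.choose k (j+1) : ℕ) : ℂ) * a^(k-(j+1))
        * ((starRingEnd ℂ) a)^(k-(j+1)) * (ρ:ℂ)^(2*(j+1))
      = (((Nat.choose k (j+1) : ℝ)^2 * ‖a‖^(2*(k-(j+1))) * ρ^(2*(j+1)) : ℝ) : ℂ) := by
    rw [mul_assoc (((Nat.choose k (j+1) * Nat.choose k (j+1) : ℕ) : ℂ)), hm]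
    push_cast
    ring
  have e2 : (t:ℂ) * (((Nat.choose (k+ℓ) (j+1) * Nat.choose (k-ℓ) (j+1) : ℕ) : ℂ)
        * a^(k+ℓ-(j+1)) * ((starRingEnd ℂ) a)^(k-ℓ-(j+1)) * (ρ:ℂ)^(2*(j+1)))
      = (((t * (Nat.choose (k+ℓ) (j+1) : ℝ) * (Nat.choose (k-ℓ) (j+1) : ℝ) * ρ^(2*(j+1))) : ℝ) : ℂ)
          * (a^(k+ℓ-(j+1)) * ((starRingEnd ℂ) a)^(k-ℓ-(j+1))) := by
    push_cast
    ring
  rw [e1, e2, Complex.add_re, Complex.ofReal_re, Complex.re_ofReal_mul]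
  unfold Sterm
  ring
lemma nat_aux (d ℓ : ℕ) : (d+ℓ)*(d-ℓ) ≤ d*d := by
  have h : d^2 - ℓ^2 = (d+ℓ)*(d-ℓ) := Nat.sq_sub_sq d ℓ
  calc (d+ℓ)*(d-ℓ) = d^2 - ℓ^2 := h.symm
    _ ≤ d^2 := Nat.sub_le _ _
    _ = d*d := sq d

lemma comb (k ℓ : ℕ) (hk : ℓ < k) : ∀ j, 1 ≤ j →
    k^2 * ((k+ℓ).choose j * (k-ℓ).choose j) ≤ (k^2 - ℓ^2) * (k.choose j)^2 := by
  intro j hj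
  induction j, hj using Nat.le_induction with
  | base =>
    simp only [Nat.choose_one_right, one_pow, mul_one]
    rw [← Nat.sq_sub_sq k ℓ]
    ring_nf
    exact le_refl _
  | succ j hj ih =>
    by_cases hcase : k - ℓ < j + 1
    · rw [Nat.choose_eq_zero_of_lt hcase]
      simp
    · push_neg at hcase
      have hjk : j < k := by omega
      apply Nat.le_of_mul_le_mul_right _ (show 0 < (j+1)*(j+1) by positivity)
      have hsub : (k+ℓ-j)*(k-ℓ-j) ≤ (k-j)*(k-j) := by
        rw [show k+ℓ-j = (k-j)+ℓ by omega, show k-ℓ-j = (k-j)-ℓ by omega]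
        exact nat_aux _ _
      calc k^2 * ((k+ℓ).choose (j+1) * (k-ℓ).choose (j+1)) * ((j+1)*(j+1))
          = k^2 * (((k+ℓ).choose (j+1) * (j+1)) * ((k-ℓ).choose (j+1) * (j+1))) := by ring
        _ = k^2 * (((k+ℓ).choose j * (k+ℓ-j)) * ((k-ℓ).choose j * (k-ℓ-j))) := by
              rw [Nat.choose_succ_right_eq, Nat.choose_succ_right_eq]
        _ = (k^2 * ((k+ℓ).choose j * (k-ℓ).choose j)) * ((k+ℓ-j) * (k-ℓ-j)) := by ring
        _ ≤ ((k^2-ℓ^2) * (k.choose j)^2) * ((k-j)*(k-j)) := Nat.mul_le_mul ih hsub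
        _ = (k^2-ℓ^2) * ((k.choose j * (k-j))*(k.choose j * (k-j))) := by ring
        _ = (k^2-ℓ^2) * ((k.choose (j+1) * (j+1))*(k.choose (j+1) * (j+1))) := by
              rw [Nat.choose_succ_right_eq]
        _ = (k^2-ℓ^2) * (k.choose (j+1))^2 * ((j+1)*(j+1)) := by ring

/-- Subharmonicity on a set: upper semicontinuity together with the sub-mean value
inequality on all closed discs contained in the set. -/
def SubharmonicOn (u : ℂ → ℝ) (Ω : Set ℂ) : Prop :=
  UpperSemicontinuousOn u Ω ∧
    ∀ z ∈ Ω, ∀ ρ : ℝ, 0 < ρ → Metric.closedBall z ρ ⊆ Ω →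
      u z ≤ (2 * Real.pi)⁻¹ *
        ∫ θ in (0:ℝ)..(2 * Real.pi), u (z + (ρ : ℂ) * Complex.exp ((θ : ℂ) * Complex.I))

/-- for positive integers `ℓ < k` and `t > 0`, the polynomial
`P(z) = |z|^{2k} + t|z|^{2k-2ℓ}Re(z^{2ℓ})` is subharmonic on `ℂ` iff `t ≤ k²/(k²-ℓ²)`. -/
theorem stmt_9 (k ℓ : ℕ) (hℓ : 0 < ℓ) (hk : ℓ < k) (t : ℝ) (ht : 0 < t) :
    SubharmonicOn
        (fun z => ‖z‖ ^ (2*k) + t * ‖z‖ ^ (2*k - 2*ℓ) * (z ^ (2*ℓ)).re)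
        Set.univ
      ↔ t ≤ (k^2 : ℝ) / ((k^2 : ℝ) - (ℓ^2 : ℝ)) := by
  have hD : (0:ℝ) < (k^2 : ℝ) - (ℓ^2 : ℝ) := by
    have : (ℓ:ℝ) < k := by exact_mod_cast hk
    have hl0 : (0:ℝ) ≤ (ℓ:ℝ) := by positivity
    nlinarith
  constructor
  · -- forward : subharmonic → t ≤ k²/(k²-ℓ²)
    rintro ⟨-, hmean⟩
    set ω : ℂ := Complex.exp ((Real.pi/(2*ℓ) : ℝ) * Complex.I) with hωdef
    have habs : ‖ω‖ = 1 := by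
      rw [hωdef]
      exact Complex.norm_exp_ofReal_mul_I _
    have hω2ℓ : ω^(2*ℓ) = -1 := by
      rw [hωdef, ← Complex.exp_nat_mul]
      rw [show ((2*ℓ : ℕ) : ℂ) * ((Real.pi/(2*ℓ) : ℝ) * Complex.I) = Real.pi * Complex.I by
        have : (ℓ:ℂ) ≠ 0 := by exact_mod_cast Nat.cast_ne_zero.mpr hℓ.ne'
        push_cast
        field_simp]
      exact Complex.exp_pi_mul_I
    have hnormSq : ω * (starRingEnd ℂ) ω = 1 := by
      rw [Complex.mul_conj]
      rw [show Complex.normSq ω = ‖ω‖ ^ 2 from (Complex.sq_norm ω).symm, habs]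
      norm_num
    -- the coefficient sequence
    set c : ℕ → ℝ := fun j => ((Nat.choose k (j+1) : ℝ))^2 * ‖ω‖^(2*(k-(j+1)))
      + t * (Nat.choose (k+ℓ) (j+1) : ℝ) * (Nat.choose (k-ℓ) (j+1) : ℝ)
        * (ω^(k+ℓ-(j+1)) * ((starRingEnd ℂ) ω)^(k-ℓ-(j+1))).re with hc
    set g : ℝ → ℝ := fun ε => ∑ j ∈ Finset.range k, ε^(2*j) * c j with hgdef
    have hgpos : ∀ ε : ℝ, 0 < ε → 0 ≤ g ε := by
      intro ε hε
      have h1 := hmean ω (Set.mem_univ _) ε hε (Set.subset_univ _)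
      simp only [] at h1
      rw [mean_id k ℓ hk t ω ε] at h1
      have h2 : 0 ≤ ∑ j ∈ Finset.range k, Sterm k ℓ t ω ε j := by linarith
      have h3 : ∑ j ∈ Finset.range k, Sterm k ℓ t ω ε j = ε^2 * g ε := by
        rw [hgdef, Finset.mul_sum]
        refine Finset.sum_congr rfl fun j _ => ?_
        show ε^(2*(j+1)) * c j = ε^2 * (ε^(2*j) * c j)
        rw [show 2*(j+1) = 2 + 2*j by ring, pow_add]
        ring
      rw [h3] at h2
      have hε2 : (0:ℝ) < ε^2 := by positivity
      nlinarith
    have hgcont : Continuous g := by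
      rw [hgdef]
      exact continuous_finset_sum _ fun j _ => (continuous_pow _).mul continuous_const
    have hg0 : g 0 = c 0 := by
      show ∑ j ∈ Finset.range k, (0:ℝ)^(2*j) * c j = c 0
      rw [Finset.sum_eq_single 0]
      · norm_num
      · intro j _ hj
        rw [zero_pow (by omega : 2*j ≠ 0), zero_mul]
      · intro h
        exact absurd (Finset.mem_range.mpr (by omega : 0 < k)) h
    have hc0 : 0 ≤ c 0 := by
      rw [← hg0]
      have htend : Filter.Tendsto g (nhdsWithin 0 (Set.Ioi 0)) (nhds (g 0)) :=
        (hgcont.tendsto 0).mono_left nhdsWithin_le_nhds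
      exact ge_of_tendsto htend (Filter.eventually_of_mem self_mem_nhdsWithin
        fun ε hε => hgpos ε hε)
    -- compute c 0
    have hR0 : (ω^(k+ℓ-1) * ((starRingEnd ℂ) ω)^(k-ℓ-1)).re = -1 := by
      have he : k+ℓ-1 = 2*ℓ + (k-ℓ-1) := by omega
      rw [he, pow_add, mul_assoc, ← mul_pow, hnormSq, one_pow, mul_one, hω2ℓ]
      norm_num
    rw [hc] at hc0
    simp only [zero_add, Nat.choose_one_right, habs, one_pow, mul_one, hR0] at hc0
    rw [le_div_iff₀ hD]
    have hcast : ((k+ℓ : ℕ):ℝ) * ((k-ℓ : ℕ):ℝ) = (k^2:ℝ) - (ℓ^2:ℝ) := by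
      rw [← Nat.cast_mul, ← Nat.sq_sub_sq, Nat.cast_sub (Nat.pow_le_pow_left hk.le 2)]
      push_cast
      ring
    have h' : t * ((k+ℓ : ℕ):ℝ) * ((k-ℓ : ℕ):ℝ) = t * ((k^2:ℝ) - (ℓ^2:ℝ)) := by
      rw [mul_assoc, hcast]
    linarith [hc0, h']
  · -- reverse : t ≤ k²/(k²-ℓ²) → subharmonic
    intro ht2
    constructor
    · have hu : Continuous (fun z : ℂ =>
          ‖z‖ ^ (2*k) + t * ‖z‖ ^ (2*k-2*ℓ) * (z^(2*ℓ)).re) := by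
        apply Continuous.add (continuous_norm.pow _)
        exact (continuous_const.mul (continuous_norm.pow _)).mul
          (Complex.continuous_re.comp (continuous_pow _))
      exact hu.upperSemicontinuous.upperSemicontinuousOn _
    · intro z _ ρ hρ _
      simp only []
      rw [mean_id k ℓ hk t z ρ]
      have hsum : 0 ≤ ∑ j ∈ Finset.range k, Sterm k ℓ t z ρ j := by
        apply Finset.sum_nonneg
        intro j hj
        have hjk : j < k := Finset.mem_range.mp hj
        unfold Sterm
        apply mul_nonneg (le_of_lt (pow_pos hρ _))
        by_cases hcase : k - ℓ < j + 1
        · rw [Nat.choose_eq_zero_of_lt hcase]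
          simp only [Nat.cast_zero, mul_zero, zero_mul, add_zero]
          positivity
        · push_neg at hcase
          set A := ‖z‖^(2*(k-(j+1))) with hA
          have hA0 : 0 ≤ A := by positivity
          have hR : |(z^(k+ℓ-(j+1)) * ((starRingEnd ℂ) z)^(k-ℓ-(j+1))).re| ≤ A := by
            calc |(z^(k+ℓ-(j+1)) * ((starRingEnd ℂ) z)^(k-ℓ-(j+1))).re|
                ≤ ‖z^(k+ℓ-(j+1)) * ((starRingEnd ℂ) z)^(k-ℓ-(j+1))‖ :=
                  Complex.abs_re_le_norm _
              _ = ‖z‖^(k+ℓ-(j+1)) * ‖z‖^(k-ℓ-(j+1)) := by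
                  rw [norm_mul, norm_pow, norm_pow, Complex.norm_conj]
              _ = A := by rw [hA, ← pow_add]; congr 1; omega
          have hR1 : -A ≤ (z^(k+ℓ-(j+1)) * ((starRingEnd ℂ) z)^(k-ℓ-(j+1))).re :=
            (abs_le.mp hR).1
          -- combinatorial bound
          have hN := comb k ℓ hk (j+1) (by omega)
          have hNR : (k:ℝ)^2 * ((Nat.choose (k+ℓ) (j+1) : ℝ) * (Nat.choose (k-ℓ) (j+1) : ℝ))
              ≤ ((k:ℝ)^2 - (ℓ:ℝ)^2) * ((Nat.choose k (j+1) : ℝ))^2 := by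
            have := (Nat.cast_le (α := ℝ)).mpr hN
            push_cast [Nat.cast_sub (by nlinarith [hk] : ℓ^2 ≤ k^2)] at this
            convert this using 2 <;> push_cast <;> ring
          have htD : t * ((k^2:ℝ) - (ℓ^2:ℝ)) ≤ (k^2:ℝ) := (le_div_iff₀ hD).mp ht2
          have hCC : (0:ℝ) ≤ (Nat.choose (k+ℓ) (j+1) : ℝ) * (Nat.choose (k-ℓ) (j+1) : ℝ) := by
            positivity
          have htC : t * ((Nat.choose (k+ℓ) (j+1) : ℝ) * (Nat.choose (k-ℓ) (j+1) : ℝ))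
              ≤ ((Nat.choose k (j+1) : ℝ))^2 := by
            have hk2 : (0:ℝ) < (k:ℝ)^2 := by
              have : (0:ℕ) < k := by omega
              positivity
            nlinarith [mul_le_mul_of_nonneg_right htD hCC]
          nlinarith [mul_le_mul_of_nonneg_right htC hA0,
            mul_le_mul_of_nonneg_left hR1 (mul_nonneg (le_of_lt ht) hCC)]
      linarith
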